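/- In the ultimate-expansion construction for A ∈ ℝ≥0^{n×n} (where at each step one removes all nodes of the entire strongly connected components of D(A) that contain critical components of A_μ^u), each value λ_ν^u equals some λ_μ of the canonical Nachtigall sequence, and every strongly connected component of the critical graph C_ν^u is also a strongly connected component of the corresponding canonical critical graph C_μ = Crit(A_μ). Consequently the cyclicity γ_μ of C_μ is a multiple of the cyclicity γ_μ^u of C_μ^u for every μ in the matching index set Σ. -/

import Mathlib

open scoped NNReal Classical

namespace MaxAlg

/-- Max-times matrix product over `ℝ≥0`. -/
noncomputable def mmul {n : ℕ} (A B : Fin n → Fin n → ℝ≥0) : Fin n → Fin n → ℝ≥0 :=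
  fun i j => Finset.univ.sup fun k => A i k * B k j

/-- Max-algebraic powers of a matrix, with `mpow A 0` the identity. -/
noncomputable def mpow {n : ℕ} (A : Fin n → Fin n → ℝ≥0) : ℕ → (Fin n → Fin n → ℝ≥0)
  | 0 => fun i j => if i = j then 1 else 0
  | (k+1) => mmul A (mpow A k)

/-- Weight of a walk `p` of length `k` (product of the edge weights). -/
noncomputable def pathWeight {n : ℕ} (A : Fin n → Fin n → ℝ≥0) (k : ℕ)
    (p : Fin (k+1) → Fin n) : ℝ≥0 :=
  ∏ t : Fin k, A (p t.castSucc) (p t.succ)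

/-- `p` is a walk in the edge relation `E`. -/
def IsEPath {n : ℕ} (E : Fin n → Fin n → Prop) (k : ℕ) (p : Fin (k+1) → Fin n) : Prop :=
  ∀ t : Fin k, E (p t.castSucc) (p t.succ)

/-- `j` is reachable from `i` in `E` (possibly by the empty path). -/
def Reach {n : ℕ} (E : Fin n → Fin n → Prop) (i j : Fin n) : Prop :=
  ∃ k, ∃ p : Fin (k+1) → Fin n, IsEPath E k p ∧ p 0 = i ∧ p (Fin.last k) = j

/-- Edge relation of the digraph associated with a nonnegative matrix. -/
def edges {n : ℕ} (A : Fin n → Fin n → ℝ≥0) (i j : Fin n) : Prop := A i j ≠ 0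

/-- Lengths of (positive-length) closed walks through `i` in `E`. -/
def cycLen {n : ℕ} (E : Fin n → Fin n → Prop) (i : Fin n) : Set ℕ :=
  {k | 0 < k ∧ ∃ p : Fin (k+1) → Fin n, IsEPath E k p ∧ p 0 = i ∧ p (Fin.last k) = i}

/-- Lengths of all closed walks in `E`. -/
def allCycLen {n : ℕ} (E : Fin n → Fin n → Prop) : Set ℕ :=
  {k | ∃ i, k ∈ cycLen E i}

/-- The gcd of a set of naturals, characterized by the gcd property. -/
noncomputable def setGcd (S : Set ℕ) : ℕ :=
  sInf {d | (∀ s ∈ S, d ∣ s) ∧ ∀ e : ℕ, (∀ s ∈ S, e ∣ s) → e ∣ d}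

/-- Cyclicity of a (completely reducible) digraph: lcm over the nodes of the
gcd of the cycle lengths through that node. -/
noncomputable def graphCyc {n : ℕ} (E : Fin n → Fin n → Prop) : ℕ :=
  Finset.univ.lcm fun i => if (cycLen E i).Nonempty then setGcd (cycLen E i) else 1

/-- The maximum cycle geometric mean `λ(A)`. -/
noncomputable def mcgm {n : ℕ} (A : Fin n → Fin n → ℝ≥0) : ℝ≥0 :=
  sSup {x | ∃ k : ℕ, 0 < k ∧ k ≤ n ∧ ∃ p : Fin (k+1) → Fin n,
    p 0 = p (Fin.last k) ∧ x = pathWeight A k p ^ ((1 : ℝ) / (k : ℝ))}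

/-- The Kleene star `A* = I ⊕ A ⊕ A² ⊕ ⋯` (entrywise supremum of all powers). -/
noncomputable def kleeneStar {n : ℕ} (A : Fin n → Fin n → ℝ≥0) : Fin n → Fin n → ℝ≥0 :=
  fun i j => ⨆ k : ℕ, mpow A k i j

/-- `(i,j)` is a critical edge: it lies on a cycle attaining `λ(A)`. -/
def IsCriticalEdge {n : ℕ} (A : Fin n → Fin n → ℝ≥0) (i j : Fin n) : Prop :=
  ∃ k : ℕ, 0 < k ∧ k ≤ n ∧ ∃ p : Fin (k+1) → Fin n, p 0 = p (Fin.last k) ∧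
    pathWeight A k p ^ ((1 : ℝ) / (k : ℝ)) = mcgm A ∧
    ∃ t : Fin k, p t.castSucc = i ∧ p t.succ = j

/-- A node lying on a critical cycle of `A`. -/
def IsCriticalNode {n : ℕ} (A : Fin n → Fin n → ℝ≥0) (i : Fin n) : Prop :=
  (∃ j, IsCriticalEdge A i j) ∨ (∃ j, IsCriticalEdge A j i)

/-- A completely reducible subgraph of the critical graph of `A`:
every edge is critical, and every edge can be completed to a cycle of the
subgraph (so each weakly connected part is strongly connected). -/
structure CritSubgraph {n : ℕ} (A : Fin n → Fin n → ℝ≥0) where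
  E : Fin n → Fin n → Prop
  critical : ∀ i j, E i j → IsCriticalEdge A i j
  reducible : ∀ i j, E i j → ∃ k, ∃ p : Fin (k+1) → Fin n,
    IsEPath E k p ∧ p 0 = j ∧ p (Fin.last k) = i

/-- Node set `N_c` of the subgraph. -/
def CritSubgraph.Nc {n : ℕ} {A : Fin n → Fin n → ℝ≥0} (G : CritSubgraph A) (i : Fin n) : Prop :=
  (∃ j, G.E i j) ∨ (∃ j, G.E j i)

/-- The matrix `C`: columns of `(A^γ)*` with indices in `N_c`, other columns zero. -/
noncomputable def Cmat {n : ℕ} (A : Fin n → Fin n → ℝ≥0) (G : CritSubgraph A) :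
    Fin n → Fin n → ℝ≥0 :=
  fun i j => if G.Nc j then kleeneStar (mpow A (graphCyc G.E)) i j else 0

/-- The matrix `R`: rows of `(A^γ)*` with indices in `N_c`, other rows zero. -/
noncomputable def Rmat {n : ℕ} (A : Fin n → Fin n → ℝ≥0) (G : CritSubgraph A) :
    Fin n → Fin n → ℝ≥0 :=
  fun i j => if G.Nc i then kleeneStar (mpow A (graphCyc G.E)) i j else 0

/-- The matrix `S`: the restriction of `A` to the edges of the subgraph. -/
noncomputable def Smat {n : ℕ} (A : Fin n → Fin n → ℝ≥0) (G : CritSubgraph A) :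
    Fin n → Fin n → ℝ≥0 :=
  fun i j => if G.E i j then A i j else 0

/-- The CSR product `P^(t) = C ⊗ S^t ⊗ R`. -/
noncomputable def csr {n : ℕ} (A : Fin n → Fin n → ℝ≥0) (G : CritSubgraph A) (t : ℕ) :
    Fin n → Fin n → ℝ≥0 :=
  mmul (mmul (Cmat A G) (mpow (Smat A G) t)) (Rmat A G)

/-- The strongly connected component (as a node set) of `i` in `E`. -/
def scc {n : ℕ} (E : Fin n → Fin n → Prop) (i : Fin n) : Set (Fin n) :=
  {j | Reach E i j ∧ Reach E j i}

/-- The principal submatrix of `A` on the strongly connected component of `i`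
in `D(A)` (other entries zero). -/
noncomputable def compMat {n : ℕ} (A : Fin n → Fin n → ℝ≥0) (i : Fin n) :
    Fin n → Fin n → ℝ≥0 :=
  fun a b => if a ∈ scc (edges A) i ∧ b ∈ scc (edges A) i then A a b else 0

/-- `λ(i)`: the m.c.g.m. of the component of `D(A)` containing `i`. -/
noncomputable def lamNode {n : ℕ} (A : Fin n → Fin n → ℝ≥0) (i : Fin n) : ℝ≥0 :=
  mcgm (compMat A i)

/-- `i` belongs to a nontrivial component of `D(A)` (it lies on a cycle). -/
def Nontrivial' {n : ℕ} (A : Fin n → Fin n → ℝ≥0) (i : Fin n) : Prop :=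
  (cycLen (edges A) i).Nonempty

/-- `γ`: the lcm of the cyclicities of the critical graphs of the nontrivial
components of `D(A)`. -/
noncomputable def gammaU {n : ℕ} (A : Fin n → Fin n → ℝ≥0) : ℕ :=
  Finset.univ.lcm fun i =>
    if Nontrivial' A i then graphCyc (IsCriticalEdge (compMat A i)) else 1

/-- Max-times matrix-vector product. -/
noncomputable def mvec {n : ℕ} (M : Fin n → Fin n → ℝ≥0) (y : Fin n → ℝ≥0) :
    Fin n → ℝ≥0 :=
  fun a => Finset.univ.sup fun k => M a k * y k

/-- `i` strongly accesses `j`: paths of every sufficiently large length exist. -/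
def StrongAccess {n : ℕ} (E : Fin n → Fin n → Prop) (i j : Fin n) : Prop :=
  ∃ T, ∀ t ≥ T, ∃ p : Fin (t+1) → Fin n, IsEPath E t p ∧ p 0 = i ∧ p (Fin.last t) = j

/-- `i` lies in a strongly connected component of `D(A)` that contains a
critical node of `B`. -/
def InCompClosure {n : ℕ} (A B : Fin n → Fin n → ℝ≥0) (i : Fin n) : Prop :=
  ∃ j, IsCriticalNode B j ∧ j ∈ scc (edges A) i

section Helpers

variable {n : ℕ}

lemma rtg_of_path {E : Fin n → Fin n → Prop} {k : ℕ} {p : Fin (k+1) → Fin n}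
    (hp : IsEPath E k p) : ∀ (d s : ℕ) (hsd : s + d ≤ k),
    Relation.ReflTransGen E (p ⟨s, by omega⟩) (p ⟨s + d, by omega⟩) := by
  intro d
  induction d with
  | zero =>
    intro s hsd
    have : (⟨s + 0, by omega⟩ : Fin (k+1)) = ⟨s, by omega⟩ := Fin.ext (by simp)
    rw [this]
  | succ d ih =>
    intro s hsd
    have h1 : E (p ⟨s, by omega⟩) (p ⟨s + 1, by omega⟩) := by
      have h := hp ⟨s, by omega⟩
      simpa [Fin.castSucc_mk, Fin.succ_mk] using h
    have h2 := ih (s + 1) (by omega)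
    have : (⟨s + 1 + d, by omega⟩ : Fin (k+1)) = ⟨s + (d + 1), by omega⟩ :=
      Fin.ext (by show s + 1 + d = s + (d + 1); omega)
    rw [this] at h2
    exact Relation.ReflTransGen.head h1 h2

lemma reach_iff {E : Fin n → Fin n → Prop} {i j : Fin n} :
    Reach E i j ↔ Relation.ReflTransGen E i j := by
  constructor
  · rintro ⟨k, p, hp, rfl, rfl⟩
    have h := rtg_of_path hp k 0 (by omega)
    have e0 : (⟨0, by omega⟩ : Fin (k+1)) = 0 := Fin.ext (by simp)
    have e1 : (⟨0 + k, by omega⟩ : Fin (k+1)) = Fin.last k := Fin.ext (by simp)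
    rwa [e0, e1] at h
  · intro h
    induction h with
    | refl => exact ⟨0, fun _ => i, fun t => t.elim0, rfl, rfl⟩
    | @tail b c hab hbc ih =>
      obtain ⟨k, p, hp, h0, hl⟩ := ih
      refine ⟨k + 1, Fin.snoc p c, ?_, ?_, ?_⟩
      · intro t
        refine Fin.lastCases ?_ ?_ t
        · rw [Fin.succ_last, Fin.snoc_last, Fin.snoc_castSucc, hl]
          exact hbc
        · intro t'
          rw [Fin.succ_castSucc, Fin.snoc_castSucc, Fin.snoc_castSucc]
          exact hp t'
      · rw [show (0 : Fin (k+2)) = Fin.castSucc 0 from Fin.ext (by simp), Fin.snoc_castSucc]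
        exact h0
      · simp

lemma mem_scc_iff {E : Fin n → Fin n → Prop} {i j : Fin n} :
    j ∈ scc E i ↔ Relation.ReflTransGen E i j ∧ Relation.ReflTransGen E j i := by
  simp [scc, reach_iff]

lemma closed_mem_scc {E : Fin n → Fin n → Prop} {k : ℕ} {p : Fin (k+1) → Fin n}
    (hp : IsEPath E k p) (hcl : p 0 = p (Fin.last k)) (s : Fin (k+1)) :
    p s ∈ scc E (p 0) := by
  rw [mem_scc_iff]
  constructor
  · have h := rtg_of_path hp s.val 0 (by omega)
    have e0 : (⟨0, by omega⟩ : Fin (k+1)) = 0 := Fin.ext (by simp)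
    have e1 : (⟨0 + s.val, by omega⟩ : Fin (k+1)) = s := Fin.ext (by simp)
    rwa [e0, e1] at h
  · have h := rtg_of_path hp (k - s.val) s.val (by omega)
    have e0 : (⟨s.val, by omega⟩ : Fin (k+1)) = s := Fin.ext (by simp)
    have e1 : (⟨s.val + (k - s.val), by omega⟩ : Fin (k+1)) = Fin.last k := Fin.ext (by simp; omega)
    rw [e0, e1] at h
    rwa [hcl]

lemma pathWeight_congr {B C : Fin n → Fin n → ℝ≥0} {k : ℕ} {p : Fin (k+1) → Fin n}
    (h : ∀ t : Fin k, B (p t.castSucc) (p t.succ) = C (p t.castSucc) (p t.succ)) :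
    pathWeight B k p = pathWeight C k p :=
  Finset.prod_congr rfl fun t _ => h t

lemma pathWeight_edge_ne_zero {B : Fin n → Fin n → ℝ≥0} {k : ℕ} {p : Fin (k+1) → Fin n}
    (h : pathWeight B k p ≠ 0) (t : Fin k) : B (p t.castSucc) (p t.succ) ≠ 0 := by
  intro h0
  exact h (Finset.prod_eq_zero (Finset.mem_univ t) h0)

lemma rpow_base_ne_zero {w : ℝ≥0} {k : ℕ} (hk : 0 < k)
    (h : w ^ ((1 : ℝ) / (k : ℝ)) ≠ 0) : w ≠ 0 := by
  intro h0
  subst h0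
  exact h (NNReal.zero_rpow (one_div_ne_zero (Nat.cast_ne_zero.2 hk.ne')))

/-- The defining set of `mcgm`. -/
def critSet (B : Fin n → Fin n → ℝ≥0) : Set ℝ≥0 :=
  {x | ∃ k : ℕ, 0 < k ∧ k ≤ n ∧ ∃ p : Fin (k+1) → Fin n,
    p 0 = p (Fin.last k) ∧ x = pathWeight B k p ^ ((1 : ℝ) / (k : ℝ))}

lemma mcgm_eq_sSup (B : Fin n → Fin n → ℝ≥0) : mcgm B = sSup (critSet B) := rfl

lemma critSet_finite (B : Fin n → Fin n → ℝ≥0) : (critSet B).Finite := by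
  have hs : critSet B ⊆ ⋃ k ∈ Set.Iic n,
      Set.range (fun p : Fin (k+1) → Fin n => pathWeight B k p ^ ((1 : ℝ) / (k : ℝ))) := by
    rintro x ⟨k, hk0, hkn, p, hc, rfl⟩
    exact Set.mem_biUnion hkn ⟨p, rfl⟩
  exact Set.Finite.subset (Set.Finite.biUnion (Set.finite_Iic n)
    fun k _ => Set.finite_range _) hs

lemma le_mcgm {B : Fin n → Fin n → ℝ≥0} {x : ℝ≥0} (hx : x ∈ critSet B) : x ≤ mcgm B :=
  le_csSup (critSet_finite B).bddAbove hx

lemma mcgm_mem {B : Fin n → Fin n → ℝ≥0} (h : mcgm B ≠ 0) : mcgm B ∈ critSet B := by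
  rcases (critSet B).eq_empty_or_nonempty with he | hne
  · exfalso
    apply h
    rw [mcgm_eq_sSup, he, csSup_empty]
    rfl
  · exact hne.csSup_mem (critSet_finite B)

end Helpers

/-- comparison of the ultimate construction (removing whole
strongly connected components of `D(A)` containing the critical components)
with the canonical Nachtigall construction (removing only the critical nodes):
each `λ_ν^u` equals some canonical `λ_μ`, every strongly connected component of
`Crit(A_ν^u)` is also a strongly connected component of `Crit(A_μ)` (same node
set and same edges on it), and consequently the cyclicity `γ_ν^u` divides
`γ_μ`. -/
theorem ultimate_matches_nachtigall {n : ℕ} (A : Fin n → Fin n → ℝ≥0)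
    (m mU : ℕ) (Aseq AU : ℕ → Fin n → Fin n → ℝ≥0)
    (hA0 : Aseq 0 = A) (hU0 : AU 0 = A)
    (hAsucc : ∀ μ, μ < m → Aseq (μ+1) = fun i j =>
      if (∀ ν ≤ μ, ¬ IsCriticalNode (Aseq ν) i) ∧ (∀ ν ≤ μ, ¬ IsCriticalNode (Aseq ν) j)
      then A i j else 0)
    (hUsucc : ∀ μ, μ < mU → AU (μ+1) = fun i j =>
      if (∀ ν ≤ μ, ¬ InCompClosure A (AU ν) i) ∧ (∀ ν ≤ μ, ¬ InCompClosure A (AU ν) j)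
      then A i j else 0)
    (hpos : ∀ μ < m, 0 < mcgm (Aseq μ)) (hstop : mcgm (Aseq m) = 0)
    (hposU : ∀ μ < mU, 0 < mcgm (AU μ)) (hstopU : mcgm (AU mU) = 0) :
    ∀ ν < mU, ∃ μ < m, mcgm (AU ν) = mcgm (Aseq μ) ∧
      (∀ i, IsCriticalNode (AU ν) i →
        scc (IsCriticalEdge (AU ν)) i = scc (IsCriticalEdge (Aseq μ)) i ∧
        ∀ a b, a ∈ scc (IsCriticalEdge (AU ν)) i → b ∈ scc (IsCriticalEdge (AU ν)) i →
          (IsCriticalEdge (AU ν) a b ↔ IsCriticalEdge (Aseq μ) a b)) ∧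
      graphCyc (IsCriticalEdge (AU ν)) ∣ graphCyc (IsCriticalEdge (Aseq μ)) := by
  intro ν hν
  have hx0 : 0 < mcgm (AU ν) := hposU ν hν
  -- entry lemmas for the ultimate sequence
  have hUentry : ∀ ν' ≤ mU, ∀ i j : Fin n,
      (∀ ρ < ν', ¬ InCompClosure A (AU ρ) i) → (∀ ρ < ν', ¬ InCompClosure A (AU ρ) j) →
      AU ν' i j = A i j := by
    intro ν' hν' i j hi hj
    match ν' with
    | 0 => rw [hU0]
    | (ρ+1) =>
      simp only [hUsucc ρ (by omega)]
      rw [if_pos ⟨fun σ hσ => hi σ (by omega), fun σ hσ => hj σ (by omega)⟩]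
  have hUzero : ∀ ν' ≤ mU, ∀ i j : Fin n, AU ν' i j ≠ 0 →
      (∀ ρ < ν', ¬ InCompClosure A (AU ρ) i) ∧ (∀ ρ < ν', ¬ InCompClosure A (AU ρ) j) ∧
      AU ν' i j = A i j := by
    intro ν' hν' i j hne
    match ν' with
    | 0 =>
      exact ⟨fun ρ h => absurd h (Nat.not_lt_zero ρ), fun ρ h => absurd h (Nat.not_lt_zero ρ),
        by rw [hU0]⟩
    | (ρ+1) =>
      simp only [hUsucc ρ (by omega)] at hne
      by_cases hc : (∀ σ ≤ ρ, ¬ InCompClosure A (AU σ) i) ∧ (∀ σ ≤ ρ, ¬ InCompClosure A (AU σ) j)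
      · refine ⟨fun σ hσ => hc.1 σ (by omega), fun σ hσ => hc.2 σ (by omega), ?_⟩
        simp only [hUsucc ρ (by omega)]
        rw [if_pos hc]
      · rw [if_neg hc] at hne
        exact absurd rfl hne
  -- entry lemmas for the canonical sequence
  have hCentry : ∀ μ' ≤ m, ∀ i j : Fin n,
      (∀ ρ < μ', ¬ IsCriticalNode (Aseq ρ) i) → (∀ ρ < μ', ¬ IsCriticalNode (Aseq ρ) j) →
      Aseq μ' i j = A i j := by
    intro μ' hμ' i j hi hj
    match μ' with
    | 0 => rw [hA0]
    | (ρ+1) =>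
      simp only [hAsucc ρ (by omega)]
      rw [if_pos ⟨fun σ hσ => hi σ (by omega), fun σ hσ => hj σ (by omega)⟩]
  have hCzero : ∀ μ' ≤ m, ∀ i j : Fin n, Aseq μ' i j ≠ 0 → Aseq μ' i j = A i j := by
    intro μ' hμ' i j hne
    match μ' with
    | 0 => rw [hA0]
    | (ρ+1) =>
      simp only [hAsucc ρ (by omega)] at hne ⊢
      by_cases hc : (∀ σ ≤ ρ, ¬ IsCriticalNode (Aseq σ) i) ∧ (∀ σ ≤ ρ, ¬ IsCriticalNode (Aseq σ) j)
      · rw [if_pos hc]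
      · rw [if_neg hc] at hne
        exact absurd rfl hne
  -- whole components of D(A) survive or die together
  have hcomp : ∀ j a : Fin n, (∀ ρ < ν, ¬ InCompClosure A (AU ρ) j) →
      a ∈ scc (edges A) j → (∀ ρ < ν, ¬ InCompClosure A (AU ρ) a) := by
    intro j a hj ha ρ hρ hin
    obtain ⟨c, hc, hcs⟩ := hin
    refine hj ρ hρ ⟨c, hc, ?_⟩
    rw [mem_scc_iff] at ha hcs ⊢
    exact ⟨ha.1.trans hcs.1, hcs.2.trans ha.2⟩
  -- nodes of a nonzero closed walk in AU ρ are alive at step ρ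
  have hcycAlive : ∀ (ρ : ℕ), ρ ≤ mU → ∀ (k : ℕ), 0 < k → ∀ p : Fin (k+1) → Fin n,
      (∀ t : Fin k, AU ρ (p t.castSucc) (p t.succ) ≠ 0) → p 0 = p (Fin.last k) →
      ∀ s : Fin (k+1), ∀ σ < ρ, ¬ InCompClosure A (AU σ) (p s) := by
    intro ρ hρ k hk p hne hcl s
    by_cases hs : s.val < k
    · have h := (hUzero ρ hρ _ _ (hne ⟨s.val, hs⟩)).1
      have e : (⟨s.val, hs⟩ : Fin k).castSucc = s := Fin.ext (by simp)
      rwa [e] at h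
    · have hs' : s = Fin.last k := Fin.ext (by have := s.isLt; simp only [Fin.val_last]; omega)
      have h := (hUzero ρ hρ _ _ (hne ⟨0, hk⟩)).1
      have e : (⟨0, hk⟩ : Fin k).castSucc = 0 := Fin.ext (by simp)
      rw [e] at h
      rwa [hs', ← hcl]
  -- choose μ : the first canonical index whose value drops to ≤ mcgm (AU ν)
  have hPm : mcgm (Aseq m) ≤ mcgm (AU ν) := by rw [hstop]; exact zero_le
  have hex : ∃ μ', mcgm (Aseq μ') ≤ mcgm (AU ν) := ⟨m, hPm⟩
  obtain ⟨μ, hμle, hμm, hμmin⟩ : ∃ μ', mcgm (Aseq μ') ≤ mcgm (AU ν) ∧ μ' ≤ m ∧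
      ∀ ρ < μ', mcgm (AU ν) < mcgm (Aseq ρ) :=
    ⟨Nat.find hex, Nat.find_spec hex, Nat.find_le hPm,
      fun ρ h => lt_of_not_ge (Nat.find_min hex h)⟩
  -- L1 : any short closed A-walk touching a surviving node has mean ≤ mcgm (AU ν)
  have hL1 : ∀ (k : ℕ), 0 < k → k ≤ n → ∀ p : Fin (k+1) → Fin n,
      p 0 = p (Fin.last k) → (∀ t : Fin k, A (p t.castSucc) (p t.succ) ≠ 0) →
      (∃ s₀ : Fin (k+1), ∀ ρ < ν, ¬ InCompClosure A (AU ρ) (p s₀)) →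
      pathWeight A k p ^ ((1:ℝ)/(k:ℝ)) ≤ mcgm (AU ν) := by
    rintro k hk hkn p hcl hE ⟨s₀, hs₀⟩
    have hall : ∀ s : Fin (k+1), ∀ ρ < ν, ¬ InCompClosure A (AU ρ) (p s) := by
      intro s
      have h1 : p s ∈ scc (edges A) (p 0) := closed_mem_scc (fun t => hE t) hcl s
      have h2 : p s₀ ∈ scc (edges A) (p 0) := closed_mem_scc (fun t => hE t) hcl s₀
      have h3 : p s ∈ scc (edges A) (p s₀) := by
        rw [mem_scc_iff] at h1 h2 ⊢
        exact ⟨h2.2.trans h1.1, h1.2.trans h2.1⟩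
      exact hcomp _ _ hs₀ h3
    have hw : pathWeight (AU ν) k p = pathWeight A k p :=
      pathWeight_congr fun t => hUentry ν hν.le _ _ (hall _) (hall _)
    exact le_mcgm ⟨k, hk, hkn, p, hcl, by rw [hw]⟩
  -- L2 : surviving nodes were never critical in the canonical sequence before μ
  have hL2 : ∀ j : Fin n, (∀ ρ < ν, ¬ InCompClosure A (AU ρ) j) →
      ∀ ρ < μ, ¬ IsCriticalNode (Aseq ρ) j := by
    intro j hj ρ hρ hcrit
    have hρm : ρ ≤ m := by omega
    have hlamx : mcgm (AU ν) < mcgm (Aseq ρ) := hμmin ρ hρ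
    have hlam0 : mcgm (Aseq ρ) ≠ 0 := (hx0.trans hlamx).ne'
    obtain ⟨k, hk, hkn, p, hcl, hw, s, hs⟩ :
        ∃ k, 0 < k ∧ k ≤ n ∧ ∃ p : Fin (k+1) → Fin n, p 0 = p (Fin.last k) ∧
          pathWeight (Aseq ρ) k p ^ ((1:ℝ)/(k:ℝ)) = mcgm (Aseq ρ) ∧
          ∃ s : Fin (k+1), p s = j := by
      rcases hcrit with ⟨b, k, hk, hkn, p, hcl, hw, t, ht1, ht2⟩ |
        ⟨b, k, hk, hkn, p, hcl, hw, t, ht1, ht2⟩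
      · exact ⟨k, hk, hkn, p, hcl, hw, t.castSucc, ht1⟩
      · exact ⟨k, hk, hkn, p, hcl, hw, t.succ, ht2⟩
    have hwne : pathWeight (Aseq ρ) k p ≠ 0 := rpow_base_ne_zero hk (by rw [hw]; exact hlam0)
    have hEeq : ∀ t : Fin k, Aseq ρ (p t.castSucc) (p t.succ) = A (p t.castSucc) (p t.succ) :=
      fun t => hCzero ρ hρm _ _ (pathWeight_edge_ne_zero hwne t)
    have hEA : ∀ t : Fin k, A (p t.castSucc) (p t.succ) ≠ 0 := fun t => by
      rw [← hEeq t]; exact pathWeight_edge_ne_zero hwne t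
    have hple : pathWeight A k p ^ ((1:ℝ)/(k:ℝ)) ≤ mcgm (AU ν) :=
      hL1 k hk hkn p hcl hEA ⟨s, by rw [hs]; exact hj⟩
    have : mcgm (Aseq ρ) ≤ mcgm (AU ν) := by
      rw [← hw, pathWeight_congr hEeq]
      exact hple
    exact absurd this (not_le.mpr hlamx)
  -- the attaining cycle of AU ν and the equality mcgm (Aseq μ) = mcgm (AU ν)
  obtain ⟨k₀, hk₀, hkn₀, p₀, hcl₀, hw₀⟩ := mcgm_mem (B := AU ν) hx0.ne'
  have hwne₀ : pathWeight (AU ν) k₀ p₀ ≠ 0 :=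
    rpow_base_ne_zero hk₀ (by rw [← hw₀]; exact hx0.ne')
  have hUedge₀ : ∀ t : Fin k₀, AU ν (p₀ t.castSucc) (p₀ t.succ) ≠ 0 :=
    pathWeight_edge_ne_zero hwne₀
  have halive₀ : ∀ s, ∀ ρ < ν, ¬ InCompClosure A (AU ρ) (p₀ s) :=
    hcycAlive ν hν.le k₀ hk₀ p₀ hUedge₀ hcl₀
  have hCeq₀ : ∀ t : Fin k₀, Aseq μ (p₀ t.castSucc) (p₀ t.succ) =
      AU ν (p₀ t.castSucc) (p₀ t.succ) := by
    intro t
    rw [(hUzero ν hν.le _ _ (hUedge₀ t)).2.2]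
    exact hCentry μ hμm _ _ (fun ρ hρ => hL2 _ (halive₀ _) ρ hρ)
      (fun ρ hρ => hL2 _ (halive₀ _) ρ hρ)
  have hxle : mcgm (AU ν) ≤ mcgm (Aseq μ) :=
    le_mcgm ⟨k₀, hk₀, hkn₀, p₀, hcl₀, by rw [hw₀, pathWeight_congr hCeq₀]⟩
  have hμeq : mcgm (Aseq μ) = mcgm (AU ν) := le_antisymm hμle hxle
  have hμltm : μ < m := by
    rcases lt_or_eq_of_le hμm with h | h
    · exact h
    · exfalso
      rw [h, hstop] at hμeq
      exact hx0.ne' hμeq.symm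
  -- L4 : critical edges of AU ν are critical edges of Aseq μ
  have hL4 : ∀ a b : Fin n, IsCriticalEdge (AU ν) a b → IsCriticalEdge (Aseq μ) a b := by
    rintro a b ⟨k, hk, hkn, p, hcl, hw, t, ht⟩
    have hwne : pathWeight (AU ν) k p ≠ 0 := rpow_base_ne_zero hk (by rw [hw]; exact hx0.ne')
    have hUe : ∀ t' : Fin k, AU ν (p t'.castSucc) (p t'.succ) ≠ 0 :=
      pathWeight_edge_ne_zero hwne
    have halive := hcycAlive ν hν.le k hk p hUe hcl
    have hCeq : ∀ t' : Fin k, Aseq μ (p t'.castSucc) (p t'.succ) =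
        AU ν (p t'.castSucc) (p t'.succ) := by
      intro t'
      rw [(hUzero ν hν.le _ _ (hUe t')).2.2]
      exact hCentry μ hμm _ _ (fun ρ hρ => hL2 _ (halive _) ρ hρ)
        (fun ρ hρ => hL2 _ (halive _) ρ hρ)
    exact ⟨k, hk, hkn, p, hcl, by rw [pathWeight_congr hCeq, hw]; exact hμeq.symm, t, ht⟩
  -- L5 : critical edges of Aseq μ with surviving endpoint are critical edges of AU ν
  have hL5 : ∀ a b : Fin n, (∀ ρ < ν, ¬ InCompClosure A (AU ρ) a) →
      IsCriticalEdge (Aseq μ) a b → IsCriticalEdge (AU ν) a b := by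
    rintro a b ha ⟨k, hk, hkn, p, hcl, hw, t, ht1, ht2⟩
    have h0 : mcgm (Aseq μ) ≠ 0 := by rw [hμeq]; exact hx0.ne'
    have hwne : pathWeight (Aseq μ) k p ≠ 0 := rpow_base_ne_zero hk (by rw [hw]; exact h0)
    have hCe : ∀ t' : Fin k, Aseq μ (p t'.castSucc) (p t'.succ) ≠ 0 :=
      pathWeight_edge_ne_zero hwne
    have hCeqA : ∀ t' : Fin k, Aseq μ (p t'.castSucc) (p t'.succ) =
        A (p t'.castSucc) (p t'.succ) := fun t' => hCzero μ hμm _ _ (hCe t')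
    have hEA : ∀ t' : Fin k, A (p t'.castSucc) (p t'.succ) ≠ 0 := fun t' => by
      rw [← hCeqA t']; exact hCe t'
    have hall : ∀ s : Fin (k+1), ∀ ρ < ν, ¬ InCompClosure A (AU ρ) (p s) := by
      intro s
      have h1 : p s ∈ scc (edges A) (p 0) := closed_mem_scc (fun t' => hEA t') hcl s
      have h2 : p t.castSucc ∈ scc (edges A) (p 0) :=
        closed_mem_scc (fun t' => hEA t') hcl t.castSucc
      have h3 : p s ∈ scc (edges A) (p t.castSucc) := by
        rw [mem_scc_iff] at h1 h2 ⊢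
        exact ⟨h2.2.trans h1.1, h1.2.trans h2.1⟩
      rw [ht1] at h3
      exact hcomp a _ ha h3
    have hUeq : ∀ t' : Fin k, AU ν (p t'.castSucc) (p t'.succ) =
        Aseq μ (p t'.castSucc) (p t'.succ) := fun t' => by
      rw [hCeqA t']
      exact hUentry ν hν.le _ _ (hall _) (hall _)
    exact ⟨k, hk, hkn, p, hcl, by rw [pathWeight_congr hUeq, hw]; exact hμeq, t, ht1, ht2⟩
  -- L6 : critical nodes of AU ν survive at step ν
  have hL6 : ∀ c : Fin n, IsCriticalNode (AU ν) c →
      ∀ ρ < ν, ¬ InCompClosure A (AU ρ) c := by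
    intro c hc
    obtain ⟨k, hk, hkn, p, hcl, hw, s, hs⟩ :
        ∃ k, 0 < k ∧ k ≤ n ∧ ∃ p : Fin (k+1) → Fin n, p 0 = p (Fin.last k) ∧
          pathWeight (AU ν) k p ^ ((1:ℝ)/(k:ℝ)) = mcgm (AU ν) ∧
          ∃ s : Fin (k+1), p s = c := by
      rcases hc with ⟨b, k, hk, hkn, p, hcl, hw, t, ht1, ht2⟩ |
        ⟨b, k, hk, hkn, p, hcl, hw, t, ht1, ht2⟩
      · exact ⟨k, hk, hkn, p, hcl, hw, t.castSucc, ht1⟩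
      · exact ⟨k, hk, hkn, p, hcl, hw, t.succ, ht2⟩
    have hwne : pathWeight (AU ν) k p ≠ 0 := rpow_base_ne_zero hk (by rw [hw]; exact hx0.ne')
    have h := hcycAlive ν hν.le k hk p (pathWeight_edge_ne_zero hwne) hcl s
    rwa [hs] at h
  -- propagation of survival along critical paths of Aseq μ
  have key : ∀ a b : Fin n, Relation.ReflTransGen (IsCriticalEdge (Aseq μ)) a b →
      (∀ ρ < ν, ¬ InCompClosure A (AU ρ) a) →
      Relation.ReflTransGen (IsCriticalEdge (AU ν)) a b ∧
      (∀ ρ < ν, ¬ InCompClosure A (AU ρ) b) := by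
    intro a b h
    induction h using Relation.ReflTransGen.head_induction_on with
    | refl => exact fun ha => ⟨Relation.ReflTransGen.refl, ha⟩
    | head h' hrest ih =>
      intro ha
      have hedge := hL5 _ _ ha h'
      have hcal := hL6 _ (Or.inr ⟨_, hedge⟩)
      obtain ⟨h1, h2⟩ := ih hcal
      exact ⟨h1.head hedge, h2⟩
  -- strongly connected components coincide
  have hscc : ∀ i, IsCriticalNode (AU ν) i →
      scc (IsCriticalEdge (AU ν)) i = scc (IsCriticalEdge (Aseq μ)) i := by
    intro i hi
    ext j
    rw [mem_scc_iff, mem_scc_iff]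
    constructor
    · rintro ⟨h1, h2⟩
      exact ⟨Relation.ReflTransGen.mono (fun a b => hL4 a b) _ _ h1,
        Relation.ReflTransGen.mono (fun a b => hL4 a b) _ _ h2⟩
    · rintro ⟨h1, h2⟩
      have hai := hL6 i hi
      obtain ⟨g1, haj⟩ := key i j h1 hai
      obtain ⟨g2, _⟩ := key j i h2 haj
      exact ⟨g1, g2⟩
  -- edges coincide on the components
  have hiff : ∀ i, IsCriticalNode (AU ν) i → ∀ a b,
      a ∈ scc (IsCriticalEdge (AU ν)) i → b ∈ scc (IsCriticalEdge (AU ν)) i →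
      (IsCriticalEdge (AU ν) a b ↔ IsCriticalEdge (Aseq μ) a b) := by
    intro i hi a b ha hb
    constructor
    · exact hL4 a b
    · intro h
      refine hL5 a b ?_ h
      rw [mem_scc_iff] at ha
      rcases Relation.ReflTransGen.cases_head ha.2 with rfl | ⟨c, hac, _⟩
      · exact hL6 a hi
      · exact hL6 a (Or.inl ⟨c, hac⟩)
  -- cyclicities divide
  have hgc : graphCyc (IsCriticalEdge (AU ν)) ∣ graphCyc (IsCriticalEdge (Aseq μ)) := by
    unfold graphCyc
    apply Finset.lcm_dvd
    intro i _
    by_cases hne : (cycLen (IsCriticalEdge (AU ν)) i).Nonempty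
    · obtain ⟨k, hk, p, hp, h0, hl⟩ := hne
      have hi : IsCriticalNode (AU ν) i := by
        refine Or.inl ⟨p (⟨0, hk⟩ : Fin k).succ, ?_⟩
        have h := hp ⟨0, hk⟩
        rwa [show ((⟨0, hk⟩ : Fin k).castSucc : Fin (k+1)) = 0 from Fin.ext (by simp), h0] at h
      have hseq := hscc i hi
      have hif := hiff i hi
      have hset : cycLen (IsCriticalEdge (AU ν)) i = cycLen (IsCriticalEdge (Aseq μ)) i := by
        ext l
        constructor
        · rintro ⟨hl0, q, hq, hq0, hql⟩
          refine ⟨hl0, q, ?_, hq0, hql⟩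
          intro t
          have hmem : ∀ s, q s ∈ scc (IsCriticalEdge (AU ν)) i := by
            intro s
            have h := closed_mem_scc hq (hq0.trans hql.symm) s
            rwa [hq0] at h
          exact (hif _ _ (hmem _) (hmem _)).mp (hq t)
        · rintro ⟨hl0, q, hq, hq0, hql⟩
          refine ⟨hl0, q, ?_, hq0, hql⟩
          intro t
          have hmem : ∀ s, q s ∈ scc (IsCriticalEdge (AU ν)) i := by
            intro s
            have h := closed_mem_scc hq (hq0.trans hql.symm) s
            rw [hq0] at h
            rw [hseq]
            exact h
          exact (hif _ _ (hmem _) (hmem _)).mpr (hq t)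
      have hne' : (cycLen (IsCriticalEdge (AU ν)) i).Nonempty := ⟨k, hk, p, hp, h0, hl⟩
      rw [if_pos hne', hset]
      have hne2 : (cycLen (IsCriticalEdge (Aseq μ)) i).Nonempty := hset ▸ hne'
      have he : (if (cycLen (IsCriticalEdge (Aseq μ)) i).Nonempty
          then setGcd (cycLen (IsCriticalEdge (Aseq μ)) i) else 1) =
          setGcd (cycLen (IsCriticalEdge (Aseq μ)) i) := if_pos hne2
      rw [← he]
      exact Finset.dvd_lcm (Finset.mem_univ i)
    · rw [if_neg hne]
      exact one_dvd _
  exact ⟨μ, hμltm, hμeq.symm, fun i hi => ⟨hscc i hi, hiff i hi⟩, hgc⟩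


end MaxAlg
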